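/- Let ε > 0 be such that 1/ε is a positive integer. For every OOEBP instance I with item sizes in (0,1] and every feasible packing of I using m bins, there exists a feasible packing of I using at most (1+ε²)·m + 1 bins in which every exceeding item has size at least ε². -/

import Mathlib

open scoped BigOperators Classical

namespace OOEBP

noncomputable section

/-- Load of bin `b` under packing `p` of instance `s`. -/
def binLoad (s : List ℝ) (p : ℕ → ℕ) (b : ℕ) : ℝ :=
  ∑ j ∈ Finset.range s.length, if p j = b then s.getD j 0 else 0

/-- A packing is feasible if each item is placed into a bin whose current
load (total size of earlier items in the same bin) is strictly below 1. -/
def Feasible (s : List ℝ) (p : ℕ → ℕ) : Prop :=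
  ∀ i < s.length,
    (∑ j ∈ Finset.range i, if p j = p i then s.getD j 0 else 0) < 1

/-- The cost of a packing: the number of nonempty bins. -/
def cost (s : List ℝ) (p : ℕ → ℕ) : ℕ :=
  ((Finset.range s.length).image p).card

/-- Optimal cost of a feasible packing of `s`. -/
def OPT (s : List ℝ) : ℕ :=
  sInf {m | ∃ p, Feasible s p ∧ cost s p = m}

/-- Item `i` is the exceeding item of its bin: the bin's total size is at
least 1 and `i` is the item of maximum index in its bin. -/
def IsExceeding (s : List ℝ) (p : ℕ → ℕ) (i : ℕ) : Prop :=
  i < s.length ∧ 1 ≤ binLoad s p (p i) ∧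
    ∀ j, i < j → j < s.length → p j ≠ p i

/-- for every feasible packing with `m` bins there is a feasible
packing with at most `(1+ε²)·m + 1` bins all of whose exceeding items have
size at least `ε²`. -/
theorem stmt0 (ε : ℝ) (hε : 0 < ε) (k : ℕ) (hk : 1 ≤ k) (hεk : ε = 1 / k)
    (s : List ℝ) (hs : ∀ x ∈ s, 0 < x ∧ x ≤ 1)
    (p : ℕ → ℕ) (hp : Feasible s p) (m : ℕ) (hm : cost s p = m) :
    ∃ q : ℕ → ℕ, Feasible s q ∧
      (∀ i, IsExceeding s q i → ε ^ 2 ≤ s.getD i 0) ∧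
      (cost s q : ℝ) ≤ (1 + ε ^ 2) * m + 1 := by
  classical
  set n := s.length with hn
  have hkR : (1:ℝ) ≤ (k:ℝ) := by exact_mod_cast hk
  have hε2 : ε ^ 2 = 1 / (k:ℝ)^2 := by rw [hεk]; ring
  have hk2pos : 0 < k^2 := by positivity
  have hsnn : ∀ j, 0 ≤ s.getD j 0 := by
    intro j
    by_cases hj : j < n
    · rw [List.getD_eq_getElem s 0 hj]
      exact (hs _ (List.getElem_mem hj)).1.le
    · rw [List.getD_eq_default s 0 (not_lt.mp hj)]
  set E : Finset ℕ := (Finset.range n).filter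
    (fun i => IsExceeding s p i ∧ s.getD i 0 < ε ^ 2) with hE
  obtain ⟨M, hpM⟩ : ∃ M, ∀ j, j < n → p j < M :=
    ⟨((Finset.range n).sup p) + 1,
      fun j hj => Nat.lt_succ_of_le (Finset.le_sup (f := p) (Finset.mem_range.mpr hj))⟩
  set l : List ℕ := E.sort (· ≤ ·) with hl
  have hmem_l : ∀ i ∈ E, i ∈ l := fun i hi => (Finset.mem_sort _).mpr hi
  have hidx_lt : ∀ i ∈ E, l.idxOf i < E.card := by
    intro i hi
    have := List.idxOf_lt_length_iff.mpr (hmem_l i hi)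
    rwa [Finset.length_sort] at this
  set q : ℕ → ℕ := fun i => if i ∈ E then M + l.idxOf i / k^2 else p i with hq
  have hqE : ∀ i ∈ E, q i = M + l.idxOf i / k^2 := by
    intro i hi; simp only [hq, if_pos hi]
  have hqnE : ∀ i, i ∉ E → q i = p i := by
    intro i hi; simp only [hq, if_neg hi]
  have hEn : ∀ i ∈ E, i < n := fun i hi => Finset.mem_range.mp (Finset.mem_filter.mp hi).1
  have hEexc : ∀ i ∈ E, IsExceeding s p i := fun i hi => (Finset.mem_filter.mp hi).2.1
  have hEsmall : ∀ i ∈ E, s.getD i 0 < ε ^ 2 := fun i hi => (Finset.mem_filter.mp hi).2.2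
  -- group cardinality bound
  have hgroup : ∀ t : ℕ, (E.filter (fun j => l.idxOf j / k^2 = t)).card ≤ k^2 := by
    intro t
    have hinj : Set.InjOn (fun j => l.idxOf j % k^2)
        (E.filter (fun j => l.idxOf j / k^2 = t)) := by
      intro a ha b hb hab
      simp only [Finset.coe_filter, Set.mem_setOf_eq] at ha hb
      simp only at hab
      have hda := ha.2
      have hdb := hb.2
      have hidx : l.idxOf a = l.idxOf b := by
        rw [← Nat.div_add_mod (l.idxOf a) (k^2), ← Nat.div_add_mod (l.idxOf b) (k^2),
          hda, hdb, hab]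
      exact (List.idxOf_inj (hmem_l a ha.1)).mp hidx
    have := Finset.card_le_card_of_injOn (t := Finset.range (k^2))
      (fun j => l.idxOf j % k^2)
      (fun j _ => Finset.mem_range.mpr (Nat.mod_lt _ hk2pos)) hinj
    simpa using this
  -- sum bound
  have hsum_lt : ∀ T : Finset ℕ, T.card ≤ k^2 → (∀ j ∈ T, s.getD j 0 < ε^2) →
      ∑ j ∈ T, s.getD j 0 < 1 := by
    intro T hTc hTs
    rcases T.eq_empty_or_nonempty with h | h
    · simp [h]
    · have h1 : ∑ j ∈ T, s.getD j 0 < ∑ _j ∈ T, ε^2 :=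
        Finset.sum_lt_sum_of_nonempty h hTs
      have h2 : ∑ _j ∈ T, ε^2 = (T.card : ℝ) * ε^2 := by
        rw [Finset.sum_const, nsmul_eq_mul]
      have h3 : (T.card : ℝ) * ε^2 ≤ (k^2 : ℝ) * ε^2 := by
        have : (T.card : ℝ) ≤ ((k^2 : ℕ) : ℝ) := by exact_mod_cast hTc
        have hε2pos : (0:ℝ) < ε^2 := by positivity
        push_cast at this ⊢
        nlinarith
      have h4 : (k^2 : ℝ) * ε^2 = 1 := by
        rw [hε2]; field_simp
      linarith
  -- for j < n and i ∈ E, q j = q i implies j ∈ E with same group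
  have hsame : ∀ i ∈ E, ∀ j, j < n → q j = q i →
      j ∈ E ∧ l.idxOf j / k^2 = l.idxOf i / k^2 := by
    intro i hi j hjn hqj
    have hjE : j ∈ E := by
      by_contra hjE
      rw [hqnE j hjE, hqE i hi] at hqj
      exact absurd (hpM j hjn) (not_lt.mpr (hqj ▸ Nat.le_add_right _ _))
    refine ⟨hjE, ?_⟩
    rw [hqE i hi, hqE j hjE] at hqj
    exact Nat.add_left_cancel hqj
  -- feasibility
  have hfeas : Feasible s q := by
    intro i hi
    by_cases hiE : i ∈ E
    · rw [← Finset.sum_filter]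
      have hTsub : (Finset.range i).filter (fun j => q j = q i) ⊆
          E.filter (fun j => l.idxOf j / k^2 = l.idxOf i / k^2) := by
        intro j hj
        simp only [Finset.mem_filter, Finset.mem_range] at hj
        obtain ⟨hji, hqj⟩ := hj
        obtain ⟨h1, h2⟩ := hsame i hiE j (hji.trans hi) hqj
        exact Finset.mem_filter.mpr ⟨h1, h2⟩
      refine hsum_lt _ (le_trans (Finset.card_le_card hTsub) (hgroup _)) ?_
      intro j hj
      exact hEsmall j (Finset.mem_filter.mp (hTsub hj)).1
    · have hle : ∀ j ∈ Finset.range i,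
          (if q j = q i then s.getD j 0 else 0) ≤ (if p j = p i then s.getD j 0 else 0) := by
        intro j hj
        have hji := Finset.mem_range.mp hj
        by_cases h : q j = q i
        · have hjE : j ∉ E := by
            intro hjE
            rw [hqE j hjE, hqnE i hiE] at h
            exact absurd (hpM i hi) (not_lt.mpr (h ▸ Nat.le_add_right _ _))
          have h2 : p j = p i := by rwa [hqnE j hjE, hqnE i hiE] at h
          rw [if_pos h, if_pos h2]
        · rw [if_neg h]
          by_cases h2 : p j = p i
          · rw [if_pos h2]; exact hsnn j
          · rw [if_neg h2]
      calc (∑ j ∈ Finset.range i, if q j = q i then s.getD j 0 else 0)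
          ≤ ∑ j ∈ Finset.range i, (if p j = p i then s.getD j 0 else 0) :=
            Finset.sum_le_sum hle
        _ < 1 := hp i hi
  -- exceeding items are large
  have hexc : ∀ i, IsExceeding s q i → ε^2 ≤ s.getD i 0 := by
    rintro i ⟨hi, hload, hmax⟩
    by_cases hiE : i ∈ E
    · exfalso
      have hlt : binLoad s q (q i) < 1 := by
        rw [binLoad, ← Finset.sum_filter]
        have hTsub : (Finset.range n).filter (fun j => q j = q i) ⊆
            E.filter (fun j => l.idxOf j / k^2 = l.idxOf i / k^2) := by
          intro j hj
          simp only [Finset.mem_filter, Finset.mem_range] at hj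
          obtain ⟨hjn, hqj⟩ := hj
          obtain ⟨h1, h2⟩ := hsame i hiE j hjn hqj
          exact Finset.mem_filter.mpr ⟨h1, h2⟩
        refine hsum_lt _ (le_trans (Finset.card_le_card hTsub) (hgroup _)) ?_
        intro j hj
        exact hEsmall j (Finset.mem_filter.mp (hTsub hj)).1
      exact absurd hload (not_le.mpr hlt)
    · by_contra hsl
      push_neg at hsl
      by_cases hEbin : ∃ e ∈ E, p e = p i
      · obtain ⟨e, heE, hpe⟩ := hEbin
        have hen : e < n := hEn e heE
        obtain ⟨_, _, he_max⟩ := hEexc e heE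
        have heq : binLoad s q (q i) =
            ∑ j ∈ Finset.range e, (if p j = p e then s.getD j 0 else 0) := by
          rw [binLoad, ← Finset.sum_filter, ← Finset.sum_filter]
          apply Finset.sum_congr _ (fun _ _ => rfl)
          ext j
          simp only [Finset.mem_filter, Finset.mem_range]
          constructor
          · rintro ⟨hjn, hqj⟩
            have hjE : j ∉ E := by
              intro hjE
              rw [hqE j hjE, hqnE i hiE] at hqj
              exact absurd (hpM i hi) (not_lt.mpr (hqj ▸ Nat.le_add_right _ _))
            rw [hqnE j hjE, hqnE i hiE] at hqj
            have hpj : p j = p e := hqj.trans hpe.symm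
            have hje : j ≠ e := by rintro rfl; exact hjE heE
            rcases lt_or_gt_of_ne hje with h | h
            · exact ⟨h, hpj⟩
            · exact absurd hpj (he_max j h hjn)
          · rintro ⟨hje, hpj⟩
            have hjn : j < n := hje.trans hen
            have hjE : j ∉ E := by
              intro hjE
              obtain ⟨_, _, hj_max⟩ := hEexc j hjE
              exact hj_max e hje hen hpj.symm
            rw [hqnE j hjE, hqnE i hiE]
            exact ⟨hjn, hpj.trans hpe⟩
        rw [heq] at hload
        exact absurd hload (not_le.mpr (hp e hen))
      · push_neg at hEbin
        have hipexc : IsExceeding s p i := by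
          refine ⟨hi, ?_, ?_⟩
          · have hbeq : binLoad s p (p i) = binLoad s q (q i) := by
              rw [binLoad, binLoad, hqnE i hiE]
              apply Finset.sum_congr rfl
              intro j hj
              have hjn := Finset.mem_range.mp hj
              by_cases hjE : j ∈ E
              · have h1 : p j ≠ p i := hEbin j hjE
                have h2 : q j ≠ p i := by
                  rw [hqE j hjE]
                  intro hcontra
                  exact absurd (hpM i hi) (not_lt.mpr (hcontra ▸ Nat.le_add_right _ _))
                rw [if_neg h2, if_neg h1]
              · rw [hqnE j hjE]
            rw [hbeq]; exact hload
          · intro j hji hjn hpj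
            have hjE : j ∉ E := fun h => hEbin j h hpj
            exact hmax j hji hjn (by rw [hqnE j hjE, hqnE i hiE]; exact hpj)
        exact hiE (Finset.mem_filter.mpr ⟨Finset.mem_range.mpr hi, hipexc, hsl⟩)
  -- cardinality of E
  have hEcard : E.card ≤ m := by
    rw [← hm, cost]
    apply Finset.card_le_card_of_injOn p
    · intro i hiE
      exact Finset.mem_image.mpr ⟨i, Finset.mem_range.mpr (hEn i hiE), rfl⟩
    · intro a ha b hb hab
      simp only [Finset.mem_coe] at ha hb
      by_contra hne
      obtain ⟨_, _, ha_max⟩ := hEexc a ha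
      obtain ⟨_, _, hb_max⟩ := hEexc b hb
      rcases lt_or_gt_of_ne hne with h | h
      · exact ha_max b h (hEn b hb) hab.symm
      · exact hb_max a h (hEn a ha) hab
  -- cost bound
  have hcostN : cost s q ≤ m + (E.card / k^2 + 1) := by
    rw [cost]
    calc ((Finset.range n).image q).card
        ≤ (((Finset.range n).image p) ∪
            ((Finset.range (E.card / k^2 + 1)).image (fun t => M + t))).card := by
          apply Finset.card_le_card
          intro b hb
          obtain ⟨i, hi, rfl⟩ := Finset.mem_image.mp hb
          by_cases hiE : i ∈ E
          · apply Finset.mem_union_right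
            refine Finset.mem_image.mpr ⟨l.idxOf i / k^2, ?_, (hqE i hiE).symm⟩
            rw [Finset.mem_range]
            have h2 := hidx_lt i hiE
            exact Nat.lt_succ_of_le (Nat.div_le_div_right (Nat.le_of_lt h2))
          · exact Finset.mem_union_left _ (Finset.mem_image.mpr ⟨i, hi, (hqnE i hiE).symm⟩)
      _ ≤ ((Finset.range n).image p).card +
            ((Finset.range (E.card / k^2 + 1)).image (fun t => M + t)).card :=
          Finset.card_union_le _ _
      _ ≤ m + (E.card / k^2 + 1) := by
          have h1 : ((Finset.range n).image p).card = m := by rw [← hm, cost]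
          have h2 := Finset.card_image_le
            (s := Finset.range (E.card / k^2 + 1)) (f := fun t => M + t)
          rw [Finset.card_range] at h2
          rw [h1]
          exact Nat.add_le_add_left h2 m
  refine ⟨q, hfeas, hexc, ?_⟩
  have hc1 : (cost s q : ℝ) ≤ (m : ℝ) + ((E.card / k^2 : ℕ) : ℝ) + 1 := by
    have h := (Nat.cast_le (α := ℝ)).mpr hcostN
    push_cast at h
    linarith
  have hc2 : ((E.card / k^2 : ℕ) : ℝ) ≤ (E.card : ℝ) / ((k:ℝ)^2) := by
    have := Nat.cast_div_le (m := E.card) (n := k^2) (α := ℝ)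
    push_cast at this
    exact this
  have hc3 : (E.card : ℝ) / ((k:ℝ)^2) ≤ ε^2 * m := by
    rw [hε2]
    have hEm : (E.card : ℝ) ≤ (m : ℝ) := by exact_mod_cast hEcard
    have hkpos : (0:ℝ) < (k:ℝ)^2 := by positivity
    rw [div_le_iff₀ hkpos]
    calc (E.card : ℝ) ≤ (m:ℝ) := hEm
      _ = 1 / (k:ℝ)^2 * m * (k:ℝ)^2 := by field_simp
  linarith


end

end OOEBP
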